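/- Let F : ℝ^d → ℝ have L-Lipschitz gradient, let 0 < h with Lh ≤ 1/2, let γ > 0, and let Z be a standard d-dimensional Gaussian random vector. Then the Langevin step Y' = Y - h∇F(Y) + √(2γh)·Z satisfies E[F(Y')] ≤ F(Y) - (h/2)‖∇F(Y)‖² + 2γLhd. -/

import Mathlib

open Real MeasureTheory

section LangevinAux

/-- Quadratic upper/lower bound from Lipschitz gradient. -/
lemma langevin_quadBound {d : ℕ} (F : EuclideanSpace ℝ (Fin d) → ℝ) (L : ℝ) (hL : 0 ≤ L)
    (hdiff : ContDiff ℝ 1 F)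
    (hLip : ∀ x y, ‖gradient F x - gradient F y‖ ≤ L * ‖x - y‖)
    (x y : EuclideanSpace ℝ (Fin d)) :
    |F y - F x - (inner ℝ (gradient F x) (y - x) : ℝ)| ≤ L * ‖y - x‖ ^ 2 := by
  set g := gradient F x with hg
  set G : EuclideanSpace ℝ (Fin d) → ℝ := fun z => F z - (inner ℝ g z : ℝ) with hG
  have hd : ∀ z, HasFDerivAt G
      ((InnerProductSpace.toDual ℝ _ (gradient F z)) - (InnerProductSpace.toDual ℝ _ g)) z := by
    intro z
    have h1 : HasFDerivAt F (InnerProductSpace.toDual ℝ _ (gradient F z)) z := by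
      have := (hdiff.differentiable one_ne_zero).differentiableAt (x := z)
      simpa [gradient, LinearIsometryEquiv.apply_symm_apply] using this.hasFDerivAt
    have h2 : HasFDerivAt (fun z : EuclideanSpace ℝ (Fin d) => (inner ℝ g z : ℝ))
        (InnerProductSpace.toDual ℝ _ g) z := by
      have : HasFDerivAt (InnerProductSpace.toDual ℝ (EuclideanSpace ℝ (Fin d)) g)
          (InnerProductSpace.toDual ℝ _ g) z :=
        (InnerProductSpace.toDual ℝ _ g).hasFDerivAt
      convert this using 1; funext z; simp [InnerProductSpace.toDual_apply_apply]
    exact h1.sub h2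
  have key : ‖G y - G x‖ ≤ (L * ‖y - x‖) * ‖y - x‖ := by
    apply Convex.norm_image_sub_le_of_norm_hasFDerivWithin_le
      (f' := fun z => (InnerProductSpace.toDual ℝ _ (gradient F z))
        - (InnerProductSpace.toDual ℝ _ g))
      (fun z _ => (hd z).hasFDerivWithinAt) ?_ (convex_segment x y)
      (left_mem_segment ℝ x y) (right_mem_segment ℝ x y)
    intro z hz
    show ‖(InnerProductSpace.toDual ℝ (EuclideanSpace ℝ (Fin d)) (gradient F z))
      - (InnerProductSpace.toDual ℝ _ g)‖ ≤ L * ‖y - x‖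
    have h3 : (InnerProductSpace.toDual ℝ (EuclideanSpace ℝ (Fin d)) (gradient F z))
        - (InnerProductSpace.toDual ℝ _ g)
        = InnerProductSpace.toDual ℝ _ (gradient F z - g) := by simp
    rw [h3, LinearIsometryEquiv.norm_map]
    calc ‖gradient F z - g‖ ≤ L * ‖z - x‖ := hLip z x
      _ ≤ L * ‖y - x‖ := by
        gcongr
        obtain ⟨a, b, ha, hb, hab, htz⟩ := hz
        have hzx : z - x = b • (y - x) := by
          rw [← htz]
          have : a = 1 - b := by linarith
          rw [this]
          module
        rw [hzx, norm_smul]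
        calc ‖b‖ * ‖y - x‖ ≤ 1 * ‖y - x‖ := by
              gcongr
              rw [Real.norm_eq_abs, abs_of_nonneg hb]; linarith
          _ = ‖y - x‖ := one_mul _
  have hEq : G y - G x = F y - F x - (inner ℝ g (y - x) : ℝ) := by
    simp only [hG, inner_sub_right]; ring
  calc |F y - F x - (inner ℝ g (y - x) : ℝ)| = ‖G y - G x‖ := by rw [hEq]; rfl
    _ ≤ (L * ‖y - x‖) * ‖y - x‖ := key
    _ = L * ‖y - x‖ ^ 2 := by ring

lemma langevin_gauss1 : Integrable (fun y : ℝ => Real.exp (-(1/2) * y ^ 2)) :=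
  integrable_exp_neg_mul_sq (by norm_num)

lemma langevin_int_sq_gauss : Integrable (fun x : ℝ => x ^ 2 * Real.exp (-(1/2) * x ^ 2)) := by
  have := integrable_rpow_mul_exp_neg_mul_sq (b := 1/2) (by norm_num) (s := 2) (by norm_num)
  refine this.congr (Filter.Eventually.of_forall fun x => ?_)
  simp [Real.rpow_natCast]

lemma langevin_oneD_zero : ∫ x : ℝ, Real.exp (-(1/2) * x ^ 2) = Real.sqrt (2 * π) := by
  rw [integral_gaussian]; norm_num; ring

lemma langevin_oneD_moment :
    ∫ x : ℝ, x ^ 2 * Real.exp (-(1/2) * x ^ 2) = Real.sqrt (2 * π) := by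
  have hu : ∀ x : ℝ, HasDerivAt (fun y : ℝ => y) 1 x := fun x => hasDerivAt_id x
  have hv : ∀ x : ℝ, HasDerivAt (fun y : ℝ => -Real.exp (-(1/2) * y ^ 2))
      (x * Real.exp (-(1/2) * x ^ 2)) x := by
    intro x
    have h1 : HasDerivAt (fun y : ℝ => -(1/2) * y ^ 2) (-x) x := by
      have := (hasDerivAt_pow 2 x).const_mul (-(1/2) : ℝ)
      simpa using this.congr_deriv (by ring)
    have := (h1.exp).neg
    refine this.congr_deriv ?_
    ring
  have key := MeasureTheory.integral_mul_deriv_eq_deriv_mul_of_integrable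
    (u := fun y : ℝ => y) (v := fun y : ℝ => -Real.exp (-(1/2) * y ^ 2))
    (u' := fun _ => 1) (v' := fun x => x * Real.exp (-(1/2) * x ^ 2))
    (fun x _ => hu x) (fun x _ => hv x) ?_ ?_ ?_
  rotate_left
  · exact langevin_int_sq_gauss.congr
      (Filter.Eventually.of_forall fun x => by simp [Pi.mul_apply]; ring)
  · have h1 := (integrable_exp_neg_mul_sq (b := 1/2) (by norm_num)).neg
    exact h1.congr (Filter.Eventually.of_forall fun x => by simp [Pi.mul_apply])
  · have h1 := (integrable_mul_exp_neg_mul_sq (b := 1/2) (by norm_num)).neg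
    exact h1.congr (Filter.Eventually.of_forall fun x => by simp [Pi.mul_apply])
  have lhs : ∫ x : ℝ, x * (x * Real.exp (-(1/2) * x ^ 2))
      = ∫ x : ℝ, x ^ 2 * Real.exp (-(1/2) * x ^ 2) := by
    congr 1; funext x; ring
  have rhs : -∫ x : ℝ, (1 : ℝ) * (-Real.exp (-(1/2) * x ^ 2))
      = ∫ x : ℝ, Real.exp (-(1/2) * x ^ 2) := by
    rw [← integral_neg]; congr 1; funext x; ring
  rw [lhs] at key
  rw [key, rhs, langevin_oneD_zero]

lemma langevin_sqrtpow (d : ℕ) :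
    Real.sqrt (2 * π) ^ d = (2 * π) ^ ((d : ℝ) / 2) := by
  rw [Real.sqrt_eq_rpow, ← Real.rpow_natCast ((2 * π) ^ (1/2 : ℝ)) d,
    ← Real.rpow_mul (by positivity)]
  congr 1; ring

lemma langevin_I0 (d : ℕ) :
    ∫ z : EuclideanSpace ℝ (Fin d), Real.exp (-‖z‖ ^ 2 / 2) = Real.sqrt (2 * π) ^ d := by
  have h : ∀ z : EuclideanSpace ℝ (Fin d), -‖z‖ ^ 2 / 2 = -(1/2) * ‖z‖ ^ 2 := fun z => by ring
  simp_rw [h]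
  rw [GaussianFourier.integral_rexp_neg_mul_sq_norm (by norm_num : (0:ℝ) < 1/2)]
  rw [finrank_euclideanSpace_fin]
  rw [show π / (1/2 : ℝ) = 2 * π by ring]
  rw [langevin_sqrtpow d]

lemma langevin_I2 (d : ℕ) :
    ∫ z : EuclideanSpace ℝ (Fin d), ‖z‖ ^ 2 * Real.exp (-‖z‖ ^ 2 / 2)
      = d * Real.sqrt (2 * π) ^ d := by
  have hmp := (EuclideanSpace.volume_preserving_symm_measurableEquiv_toLp (ι := Fin d)).symm
  rw [← hmp.integral_comp (MeasurableEquiv.measurableEmbedding _)]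
  have hnorm : ∀ x : Fin d → ℝ,
      ‖(MeasurableEquiv.toLp 2 (Fin d → ℝ)).symm.symm x‖ ^ 2 = ∑ i, x i ^ 2 := by
    intro x
    rw [EuclideanSpace.norm_eq]
    rw [Real.sq_sqrt (by positivity)]
    simp [sq_abs]
  set F : Fin d → Fin d → ℝ → ℝ :=
    fun i j y => (if j = i then y ^ 2 else 1) * Real.exp (-(1/2) * y ^ 2) with hF
  have hFint : ∀ i j, Integrable (F i j) := by
    intro i j
    by_cases hji : j = i
    · simpa [hF, hji] using langevin_int_sq_gauss
    · simpa [hF, hji] using langevin_gauss1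
  have hFval : ∀ i j, ∫ y : ℝ, F i j y = Real.sqrt (2 * π) := by
    intro i j
    by_cases hji : j = i
    · simpa [hF, hji] using langevin_oneD_moment
    · simpa [hF, hji] using langevin_oneD_zero
  have step1 : ∀ x : Fin d → ℝ,
      ‖(MeasurableEquiv.toLp 2 (Fin d → ℝ)).symm.symm x‖ ^ 2 *
        Real.exp (-‖(MeasurableEquiv.toLp 2 (Fin d → ℝ)).symm.symm x‖ ^ 2 / 2)
      = ∑ i, ∏ j, F i j (x j) := by
    intro x
    rw [hnorm]
    have e1 : -(∑ i, x i ^ 2) / 2 = ∑ i, (-(1/2) * x i ^ 2) := by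
      rw [← Finset.mul_sum]; ring
    rw [e1, Real.exp_sum, Finset.sum_mul]
    refine Finset.sum_congr rfl fun i _ => ?_
    rw [hF]
    simp only []
    rw [Finset.prod_mul_distrib, Finset.prod_ite_eq']
    simp
  rw [show (fun x : Fin d → ℝ => ‖(MeasurableEquiv.toLp 2 (Fin d → ℝ)).symm.symm x‖ ^ 2 *
        Real.exp (-‖(MeasurableEquiv.toLp 2 (Fin d → ℝ)).symm.symm x‖ ^ 2 / 2))
      = fun x : Fin d → ℝ => ∑ i, ∏ j, F i j (x j) from funext step1]
  rw [integral_finset_sum Finset.univ (show ∀ i ∈ Finset.univ, Integrable (fun x : Fin d → ℝ => ∏ j, F i j (x j)) volume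
    from fun i _ => Integrable.fintype_prod (fun j => hFint i j))]
  have hval : ∀ i : Fin d, (∫ x : Fin d → ℝ, ∏ j, F i j (x j)) = Real.sqrt (2 * π) ^ d := by
    intro i
    rw [MeasureTheory.integral_fintype_prod_volume_eq_prod (f := F i)]
    simp [hFval]
  simp [hval, Finset.card_univ]

lemma langevin_I1 {d : ℕ} (g : EuclideanSpace ℝ (Fin d)) :
    ∫ z : EuclideanSpace ℝ (Fin d), Real.exp (-‖z‖ ^ 2 / 2) * (inner ℝ g z : ℝ) = 0 := by
  have h := MeasureTheory.integral_neg_eq_self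
    (fun z : EuclideanSpace ℝ (Fin d) => Real.exp (-‖z‖ ^ 2 / 2) * (inner ℝ g z : ℝ)) volume
  simp only [norm_neg, inner_neg_right, mul_neg] at h
  have h2 : ∫ z : EuclideanSpace ℝ (Fin d), Real.exp (-‖z‖ ^ 2 / 2) * (inner ℝ g z : ℝ)
      = - ∫ z : EuclideanSpace ℝ (Fin d), Real.exp (-‖z‖ ^ 2 / 2) * (inner ℝ g z : ℝ) := by
    rw [← integral_neg, h]
  linarith

lemma langevin_gaussE_int {d : ℕ} (b : ℝ) (hb : 0 < b) :
    Integrable (fun z : EuclideanSpace ℝ (Fin d) => Real.exp (-b * ‖z‖ ^ 2)) := by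
  have h := GaussianFourier.integrable_cexp_neg_mul_sq_norm_add (b := (b:ℂ))
    (by simpa using hb) 0 (0 : EuclideanSpace ℝ (Fin d))
  have h2 := h.norm
  refine h2.congr (Filter.Eventually.of_forall fun v => ?_)
  have e : (-(b:ℂ) * (‖v‖:ℂ) ^ 2 + 0 * ((inner ℝ (0 : EuclideanSpace ℝ (Fin d)) v : ℝ) : ℂ))
      = ((-b * ‖v‖ ^ 2 : ℝ) : ℂ) := by push_cast; ring
  show ‖Complex.exp _‖ = _
  rw [e, Complex.norm_exp, Complex.ofReal_re]

lemma langevin_exp_half_int {d : ℕ} :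
    Integrable (fun z : EuclideanSpace ℝ (Fin d) => Real.exp (-‖z‖ ^ 2 / 2)) := by
  have := langevin_gaussE_int (d := d) (1/2) (by norm_num)
  refine this.congr (Filter.Eventually.of_forall fun v => ?_)
  ring_nf

lemma langevin_sq_exp_bound {t : ℝ} (ht : 0 ≤ t) :
    t * Real.exp (-t / 2) ≤ 4 * Real.exp (-(1/4) * t) := by
  have h1 : t / 4 + 1 ≤ Real.exp (t / 4) := Real.add_one_le_exp _
  have e1 : Real.exp (-t/4) * Real.exp (t/4) = 1 := by
    rw [← Real.exp_add, show (-t/4 + t/4 : ℝ) = 0 by ring, Real.exp_zero]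
  have e2 : Real.exp (-t/2) = Real.exp (-t/4) * Real.exp (-t/4) := by
    rw [← Real.exp_add]; ring_nf
  have hp : 0 < Real.exp (-t/4) := Real.exp_pos _
  have key : t * Real.exp (-t/4) ≤ 4 := by
    nlinarith [Real.exp_pos (t/4)]
  have hb : t * Real.exp (-t/2) ≤ 4 * Real.exp (-t/4) := by
    rw [e2, ← mul_assoc]
    exact mul_le_mul_of_nonneg_right key hp.le
  calc t * Real.exp (-t/2) ≤ 4 * Real.exp (-t/4) := hb
    _ = 4 * Real.exp (-(1/4) * t) := by ring_nf

lemma langevin_norm_sq_exp_int {d : ℕ} :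
    Integrable (fun z : EuclideanSpace ℝ (Fin d) => ‖z‖ ^ 2 * Real.exp (-‖z‖ ^ 2 / 2)) := by
  refine Integrable.mono' ((langevin_gaussE_int (1/4) (by norm_num)).const_mul 4) ?_
    (Filter.Eventually.of_forall fun z => ?_)
  · exact (((continuous_norm.pow 2)).mul
      (((continuous_norm.pow 2).neg.div_const 2).rexp)).aestronglyMeasurable
  · have := langevin_sq_exp_bound (t := ‖z‖ ^ 2) (by positivity)
    rw [Real.norm_eq_abs, abs_of_nonneg (by positivity)]
    simpa using this

lemma langevin_norm_exp_int {d : ℕ} :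
    Integrable (fun z : EuclideanSpace ℝ (Fin d) => ‖z‖ * Real.exp (-‖z‖ ^ 2 / 2)) := by
  refine Integrable.mono' (langevin_exp_half_int.add langevin_norm_sq_exp_int) ?_
    (Filter.Eventually.of_forall fun z => ?_)
  · exact ((continuous_norm).mul
      (((continuous_norm.pow 2).neg.div_const 2).rexp)).aestronglyMeasurable
  · rw [Real.norm_eq_abs, abs_of_nonneg (by positivity)]
    have h1 : ‖z‖ ≤ 1 + ‖z‖ ^ 2 := by nlinarith [norm_nonneg z, sq_nonneg (‖z‖ - 1)]
    have h2 : 0 < Real.exp (-‖z‖ ^ 2 / 2) := Real.exp_pos _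
    simp only [Pi.add_apply]
    nlinarith [mul_le_mul_of_nonneg_right h1 h2.le]

lemma langevin_inner_exp_int {d : ℕ} (g : EuclideanSpace ℝ (Fin d)) :
    Integrable (fun z : EuclideanSpace ℝ (Fin d) =>
      Real.exp (-‖z‖ ^ 2 / 2) * (inner ℝ g z : ℝ)) := by
  refine Integrable.mono' (langevin_norm_exp_int.const_mul ‖g‖) ?_
    (Filter.Eventually.of_forall fun z => ?_)
  · exact ((((continuous_norm.pow 2).neg.div_const 2).rexp).mul
      (continuous_const.inner continuous_id)).aestronglyMeasurable
  · rw [Real.norm_eq_abs, abs_mul, abs_of_nonneg (Real.exp_pos _).le]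
    calc Real.exp (-‖z‖ ^ 2 / 2) * |(inner ℝ g z : ℝ)|
        ≤ Real.exp (-‖z‖ ^ 2 / 2) * (‖g‖ * ‖z‖) :=
          mul_le_mul_of_nonneg_left (abs_real_inner_le_norm g z) (Real.exp_pos _).le
      _ = ‖g‖ * (‖z‖ * Real.exp (-‖z‖ ^ 2 / 2)) := by ring

/-- Integrability and integral of an affine-quadratic polynomial against the Gaussian weight. -/
lemma langevin_poly_int {d : ℕ} (g : EuclideanSpace ℝ (Fin d)) (c α β κ : ℝ) :
    Integrable (fun z : EuclideanSpace ℝ (Fin d) =>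
      c * Real.exp (-‖z‖ ^ 2 / 2) * (α + β * (inner ℝ g z : ℝ) + κ * ‖z‖ ^ 2)) := by
  have h := (((langevin_exp_half_int (d := d)).const_mul (c * α)).add
      ((langevin_inner_exp_int g).const_mul (c * β))).add
      ((langevin_norm_sq_exp_int (d := d)).const_mul (c * κ))
  refine h.congr (Filter.Eventually.of_forall fun z => ?_)
  simp only [Pi.add_apply]
  ring

lemma langevin_poly_integral {d : ℕ} (g : EuclideanSpace ℝ (Fin d)) (c α β κ : ℝ) :
    ∫ z : EuclideanSpace ℝ (Fin d),
      c * Real.exp (-‖z‖ ^ 2 / 2) * (α + β * (inner ℝ g z : ℝ) + κ * ‖z‖ ^ 2)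
    = (c * Real.sqrt (2 * π) ^ d) * (α + κ * d) := by
  have e : (fun z : EuclideanSpace ℝ (Fin d) =>
      c * Real.exp (-‖z‖ ^ 2 / 2) * (α + β * (inner ℝ g z : ℝ) + κ * ‖z‖ ^ 2))
      = fun z => ((c * α) * Real.exp (-‖z‖ ^ 2 / 2)
        + (c * β) * (Real.exp (-‖z‖ ^ 2 / 2) * (inner ℝ g z : ℝ)))
        + (c * κ) * (‖z‖ ^ 2 * Real.exp (-‖z‖ ^ 2 / 2)) := by
    funext z; ring
  rw [e]
  have i1 : Integrable (fun z : EuclideanSpace ℝ (Fin d) =>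
      (c * α) * Real.exp (-‖z‖ ^ 2 / 2)) := (langevin_exp_half_int (d := d)).const_mul _
  have i2 : Integrable (fun z : EuclideanSpace ℝ (Fin d) =>
      (c * β) * (Real.exp (-‖z‖ ^ 2 / 2) * (inner ℝ g z : ℝ))) :=
    (langevin_inner_exp_int g).const_mul _
  have i3 : Integrable (fun z : EuclideanSpace ℝ (Fin d) =>
      (c * κ) * (‖z‖ ^ 2 * Real.exp (-‖z‖ ^ 2 / 2))) :=
    (langevin_norm_sq_exp_int (d := d)).const_mul _
  have i12 : Integrable (fun z : EuclideanSpace ℝ (Fin d) =>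
      (c * α) * Real.exp (-‖z‖ ^ 2 / 2)
        + (c * β) * (Real.exp (-‖z‖ ^ 2 / 2) * (inner ℝ g z : ℝ))) := i1.add i2
  rw [integral_add i12 i3, integral_add i1 i2]
  rw [integral_const_mul, integral_const_mul, integral_const_mul]
  rw [langevin_I0 d, langevin_I1 g, langevin_I2 d]
  ring

end LangevinAux

/-- One Langevin step: the expected function value under a standard Gaussian noise
Z ∼ N(0, I_d) satisfies E[F(Y')] ≤ F(Y) - (h/2)‖∇F(Y)‖² + 2γLhd. -/
theorem stmt3 (d : ℕ) (F : EuclideanSpace ℝ (Fin d) → ℝ) (L γ h : ℝ)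
    (hL : 0 < L) (hγ : 0 < γ) (hh : 0 < h) (hLh : L * h ≤ 1 / 2)
    (hdiff : ContDiff ℝ 1 F)
    (hLip : ∀ x y, ‖gradient F x - gradient F y‖ ≤ L * ‖x - y‖)
    (Y : EuclideanSpace ℝ (Fin d)) :
    (∫ z : EuclideanSpace ℝ (Fin d),
        ((2 * π) ^ (-(d : ℝ) / 2) * Real.exp (-‖z‖ ^ 2 / 2)) *
          F (Y - h • gradient F Y + Real.sqrt (2 * γ * h) • z))
      ≤ F Y - h / 2 * ‖gradient F Y‖ ^ 2 + 2 * γ * L * h * d := by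
  set g := gradient F Y with hg
  set s := Real.sqrt (2 * γ * h) with hs
  set c : ℝ := (2 * π) ^ (-(d : ℝ) / 2) with hcdef
  set w := Y - h • g with hw
  have hc : 0 < c := Real.rpow_pos_of_pos (by positivity) _
  have hs0 : 0 ≤ s := Real.sqrt_nonneg _
  have hs2 : s ^ 2 = 2 * γ * h := Real.sq_sqrt (by positivity)
  have hcK : c * Real.sqrt (2 * π) ^ d = 1 := by
    rw [langevin_sqrtpow d, hcdef, ← Real.rpow_add (by positivity),
      show (-(d:ℝ)/2 + (d:ℝ)/2) = 0 by ring, Real.rpow_zero]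
  -- pointwise expansion of the displacement
  have hu : ∀ z : EuclideanSpace ℝ (Fin d), (w + s • z) - Y = (-h) • g + s • z := by
    intro z; rw [hw]; module
  have hin : ∀ z : EuclideanSpace ℝ (Fin d),
      (inner ℝ g ((w + s • z) - Y) : ℝ) = -(h * ‖g‖ ^ 2) + s * (inner ℝ g z : ℝ) := by
    intro z
    rw [hu z, inner_add_right, real_inner_smul_right, real_inner_smul_right,
      real_inner_self_eq_norm_sq]
    ring
  have hnu : ∀ z : EuclideanSpace ℝ (Fin d),
      ‖(w + s • z) - Y‖ ^ 2
        = h ^ 2 * ‖g‖ ^ 2 - 2 * (h * s) * (inner ℝ g z : ℝ) + s ^ 2 * ‖z‖ ^ 2 := by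
    intro z
    rw [hu z, @norm_add_sq_real, real_inner_smul_left, real_inner_smul_right,
      norm_smul, norm_smul, Real.norm_eq_abs, Real.norm_eq_abs,
      abs_neg, abs_of_pos hh, abs_of_nonneg hs0]
    ring
  -- upper and lower pointwise bounds
  set α : ℝ := F Y - h * ‖g‖ ^ 2 + L * h ^ 2 * ‖g‖ ^ 2 with hα
  set β : ℝ := s - 2 * L * h * s with hβ
  set κ : ℝ := L * s ^ 2 with hκ
  set α₂ : ℝ := F Y - h * ‖g‖ ^ 2 - L * h ^ 2 * ‖g‖ ^ 2 with hα₂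
  set β₂ : ℝ := s + 2 * L * h * s with hβ₂
  set κ₂ : ℝ := -(L * s ^ 2) with hκ₂
  have hup : ∀ z : EuclideanSpace ℝ (Fin d),
      F (w + s • z) ≤ α + β * (inner ℝ g z : ℝ) + κ * ‖z‖ ^ 2 := by
    intro z
    have hq := (abs_le.mp (langevin_quadBound F L hL.le hdiff hLip Y (w + s • z))).2
    rw [hin z, hnu z] at hq
    have hexp : L * (h ^ 2 * ‖g‖ ^ 2 - 2 * (h * s) * (inner ℝ g z : ℝ) + s ^ 2 * ‖z‖ ^ 2)
        = L * h ^ 2 * ‖g‖ ^ 2 - 2 * L * h * s * (inner ℝ g z : ℝ) + L * s ^ 2 * ‖z‖ ^ 2 := by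
      ring
    rw [hexp] at hq
    rw [hα, hβ, hκ]
    linarith
  have hlow : ∀ z : EuclideanSpace ℝ (Fin d),
      α₂ + β₂ * (inner ℝ g z : ℝ) + κ₂ * ‖z‖ ^ 2 ≤ F (w + s • z) := by
    intro z
    have hq := (abs_le.mp (langevin_quadBound F L hL.le hdiff hLip Y (w + s • z))).1
    rw [hin z, hnu z] at hq
    have hexp : L * (h ^ 2 * ‖g‖ ^ 2 - 2 * (h * s) * (inner ℝ g z : ℝ) + s ^ 2 * ‖z‖ ^ 2)
        = L * h ^ 2 * ‖g‖ ^ 2 - 2 * L * h * s * (inner ℝ g z : ℝ) + L * s ^ 2 * ‖z‖ ^ 2 := by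
      ring
    rw [hexp] at hq
    rw [hα₂, hβ₂, hκ₂]
    linarith
  -- integrability of the main integrand
  have hmeas : AEStronglyMeasurable
      (fun z : EuclideanSpace ℝ (Fin d) =>
        (c * Real.exp (-‖z‖ ^ 2 / 2)) * F (w + s • z)) volume := by
    have hcont : Continuous (fun z : EuclideanSpace ℝ (Fin d) => F (w + s • z)) :=
      hdiff.continuous.comp (continuous_const.add (continuous_id.const_smul s))
    exact ((continuous_const.mul
      (((continuous_norm.pow 2).neg.div_const 2).rexp)).mul hcont).aestronglyMeasurable
  have hfle : ∀ z : EuclideanSpace ℝ (Fin d),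
      (c * Real.exp (-‖z‖ ^ 2 / 2)) * F (w + s • z)
        ≤ c * Real.exp (-‖z‖ ^ 2 / 2) * (α + β * (inner ℝ g z : ℝ) + κ * ‖z‖ ^ 2) := by
    intro z
    exact mul_le_mul_of_nonneg_left (hup z) (by positivity)
  have hfge : ∀ z : EuclideanSpace ℝ (Fin d),
      c * Real.exp (-‖z‖ ^ 2 / 2) * (α₂ + β₂ * (inner ℝ g z : ℝ) + κ₂ * ‖z‖ ^ 2)
        ≤ (c * Real.exp (-‖z‖ ^ 2 / 2)) * F (w + s • z) := by
    intro z
    exact mul_le_mul_of_nonneg_left (hlow z) (by positivity)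
  have hint : Integrable (fun z : EuclideanSpace ℝ (Fin d) =>
      (c * Real.exp (-‖z‖ ^ 2 / 2)) * F (w + s • z)) := by
    exact integrable_of_le_of_le hmeas
      (Filter.Eventually.of_forall hfge) (Filter.Eventually.of_forall hfle)
      (langevin_poly_int g c α₂ β₂ κ₂) (langevin_poly_int g c α β κ)
  calc (∫ z : EuclideanSpace ℝ (Fin d),
        (c * Real.exp (-‖z‖ ^ 2 / 2)) * F (w + s • z))
      ≤ ∫ z : EuclideanSpace ℝ (Fin d),
          c * Real.exp (-‖z‖ ^ 2 / 2) * (α + β * (inner ℝ g z : ℝ) + κ * ‖z‖ ^ 2) :=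
        integral_mono hint (langevin_poly_int g c α β κ) hfle
    _ = (c * Real.sqrt (2 * π) ^ d) * (α + κ * d) := langevin_poly_integral g c α β κ
    _ = α + κ * d := by rw [hcK]; ring
    _ ≤ F Y - h / 2 * ‖g‖ ^ 2 + 2 * γ * L * h * d := by
        rw [hα, hκ, hs2]
        have hG : 0 ≤ ‖g‖ ^ 2 := sq_nonneg _
        have key : L * h ^ 2 * ‖g‖ ^ 2 ≤ h / 2 * ‖g‖ ^ 2 := by
          have h1 : 0 ≤ (1 / 2 - L * h) * (h * ‖g‖ ^ 2) :=
            mul_nonneg (by linarith) (mul_nonneg hh.le hG)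
          nlinarith
        have e : L * (2 * γ * h) * (d : ℝ) = 2 * γ * L * h * d := by ring
        rw [e]
        linarith
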